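/- Let c_P ∈ ℝⁿ solve (A + S κ J) c_P = g where κ is an N×N symmetric positive definite matrix, A symmetric positive definite, J = Sᵀ. As the smallest eigenvalue of κ tends to infinity (along κ = t κ₀ with t → ∞ and κ₀ symmetric positive definite), the solutions c_t converge to the solution c of the saddle-point problem A c + S λ = g, J c = 0, provided S has full column rank. -/

import Mathlib

open Matrix Filter

lemma posdef_lower {n : ℕ} {B : Matrix (Fin n) (Fin n) ℝ} (hB : B.PosDef) :
    ∃ α > (0:ℝ), ∀ x : Fin n → ℝ, α * (x ⬝ᵥ x) ≤ x ⬝ᵥ (B *ᵥ x) := by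
  rcases Nat.eq_zero_or_pos n with h0 | hn
  · subst h0
    exact ⟨1, one_pos, fun x => by simp [dotProduct]⟩
  · set E := EuclideanSpace ℝ (Fin n)
    have : Nontrivial E := by
      haveI : Nonempty (Fin n) := ⟨⟨0, hn⟩⟩
      infer_instance
    have hsph : (Metric.sphere (0:E) 1).Nonempty :=
      NormedSpace.sphere_nonempty.mpr zero_le_one
    have hcomp : IsCompact (Metric.sphere (0:E) 1) := isCompact_sphere 0 1
    have hproj : ∀ i, Continuous fun x : E => x i :=
      fun i => (continuous_apply i).comp (PiLp.continuous_ofLp _ _)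
    have hcont : Continuous (fun x : E => (x : Fin n → ℝ) ⬝ᵥ (B *ᵥ (x : Fin n → ℝ))) := by
      simp only [dotProduct, mulVec]
      exact continuous_finset_sum _ fun i _ =>
        (hproj i).mul (continuous_finset_sum _ fun j _ => (continuous_const.mul (hproj j)))
    obtain ⟨u, hu, humin⟩ := hcomp.exists_isMinOn hsph hcont.continuousOn
    have hu1 : ‖u‖ = 1 := by simpa using hu
    have hune : (u : Fin n → ℝ) ≠ 0 := by
      intro h
      have : u = 0 := by
        apply (WithLp.equiv 2 (Fin n → ℝ)).injective
        simpa using h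
      rw [this] at hu1; simp at hu1
    have hα : (0:ℝ) < (u : Fin n → ℝ) ⬝ᵥ (B *ᵥ (u : Fin n → ℝ)) := by
      have := hB.dotProduct_mulVec_pos hune
      simpa using this
    refine ⟨_, hα, fun x => ?_⟩
    rcases eq_or_ne x 0 with rfl | hx
    · simp
    · set X : E := (WithLp.equiv 2 (Fin n → ℝ)).symm x with hX
      have hXne : X ≠ 0 := by
        simp only [hX, ne_eq, EmbeddingLike.map_eq_zero_iff]
        exact fun h => hx (by simpa using congrArg (WithLp.equiv 2 (Fin n → ℝ)) h)
      set r : ℝ := ‖X‖ with hr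
      have hrpos : 0 < r := norm_pos_iff.mpr hXne
      have hmem : r⁻¹ • X ∈ Metric.sphere (0:E) 1 := by
        simp [norm_smul, abs_of_pos (inv_pos.mpr hrpos), hr, inv_mul_cancel₀ hrpos.ne']
        exact inv_mul_cancel₀ hrpos.ne'
      have hle := humin hmem
      have hcoe : ((r⁻¹ • X : E) : Fin n → ℝ) = r⁻¹ • x := rfl
      have hXcoe : ((X : E) : Fin n → ℝ) = x := rfl
      simp only [Set.mem_setOf_eq, hcoe] at hle
      rw [smul_dotProduct, mulVec_smul, dotProduct_smul] at hle
      have hr2 : x ⬝ᵥ x = r ^ 2 := by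
        have : r = Real.sqrt (∑ i, x i ^ 2) := by
          rw [hr, EuclideanSpace.norm_eq]
          congr 1
          refine Finset.sum_congr rfl fun i _ => ?_
          rw [Real.norm_eq_abs, sq_abs]
          rfl
        rw [this, Real.sq_sqrt (Finset.sum_nonneg fun i _ => sq_nonneg _)]
        simp [dotProduct, sq]
      -- hle : u ⬝ᵥ B u ≤ r⁻¹ • (r⁻¹ • (x ⬝ᵥ B x))
      have := mul_le_mul_of_nonneg_left hle (le_of_lt (by positivity : (0:ℝ) < r ^ 2))
      calc ((u : Fin n → ℝ) ⬝ᵥ (B *ᵥ (u : Fin n → ℝ))) * (x ⬝ᵥ x)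
          = r ^ 2 * ((u : Fin n → ℝ) ⬝ᵥ (B *ᵥ (u : Fin n → ℝ))) := by rw [hr2]; ring
        _ ≤ r ^ 2 * (r⁻¹ • (r⁻¹ • (x ⬝ᵥ (B *ᵥ x)))) := this
        _ = x ⬝ᵥ (B *ᵥ x) := by
            simp only [smul_eq_mul]
            field_simp

lemma dot_self_nonneg {m : ℕ} (x : Fin m → ℝ) : 0 ≤ x ⬝ᵥ x :=
  Finset.sum_nonneg fun i _ => mul_self_nonneg _

lemma cs_dot {m : ℕ} (x y : Fin m → ℝ) : (x ⬝ᵥ y) ^ 2 ≤ (x ⬝ᵥ x) * (y ⬝ᵥ y) := by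
  have := Finset.sum_mul_sq_le_sq_mul_sq Finset.univ x y
  simpa [dotProduct, sq] using this

theorem stmt_17 {n N : ℕ}
    (A : Matrix (Fin n) (Fin n) ℝ) (hA : A.PosDef)
    (κ₀ : Matrix (Fin N) (Fin N) ℝ) (hκ₀ : κ₀.PosDef)
    (S : Matrix (Fin n) (Fin N) ℝ)
    (hS : ∀ v : Fin N → ℝ, S *ᵥ v = 0 → v = 0)
    (g c : Fin n → ℝ)
    (hconstraint : Sᵀ *ᵥ c = 0)
    (hsaddle : ∃ lam : Fin N → ℝ, A *ᵥ c + S *ᵥ lam = g) :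
    Tendsto (fun t : ℝ => (A + t • (S * κ₀ * Sᵀ))⁻¹ *ᵥ g) atTop (nhds c) := by
  obtain ⟨lam, hlam⟩ := hsaddle
  obtain ⟨α, hα, hAb⟩ := posdef_lower hA
  obtain ⟨μ, hμ, hκb⟩ := posdef_lower hκ₀
  set P := S * κ₀ * Sᵀ with hPdef
  have hPsd : P.PosSemidef := by
    have := hκ₀.posSemidef.mul_mul_conjTranspose_same S
    simpa [conjTranspose_eq_transpose_of_trivial, hPdef] using this
  set L : ℝ := lam ⬝ᵥ lam with hLdef
  have hL0 : 0 ≤ L := dot_self_nonneg lam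
  set C : ℝ := L / (α * μ) with hCdef
  have key : ∀ t : ℝ, 1 ≤ t → ‖(A + t • P)⁻¹ *ᵥ g - c‖ ≤ Real.sqrt (C / t) := by
    intro t ht
    have ht0 : (0:ℝ) < t := lt_of_lt_of_le one_pos ht
    have htP : (t • P).PosSemidef := by
      refine Matrix.PosSemidef.of_dotProduct_mulVec_nonneg ?_ fun x => ?_
      · show (t • P)ᴴ = t • P
        rw [conjTranspose_smul, hPsd.1.eq]
        simp
      · have := hPsd.dotProduct_mulVec_nonneg x
        rw [smul_mulVec, dotProduct_smul]
        exact smul_nonneg ht0.le this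
    have hMt : (A + t • P).PosDef := hA.add_posSemidef htP
    have hdet : IsUnit (A + t • P).det := isUnit_iff_ne_zero.mpr hMt.det_pos.ne'
    set ct := (A + t • P)⁻¹ *ᵥ g with hct
    have h1 : (A + t • P) *ᵥ ct = g := by
      rw [hct, mulVec_mulVec, mul_nonsing_inv _ hdet, one_mulVec]
    have hPc : P *ᵥ c = 0 := by
      rw [hPdef, ← mulVec_mulVec, ← mulVec_mulVec, hconstraint, mulVec_zero, mulVec_zero]
    have hMc : (A + t • P) *ᵥ c = A *ᵥ c := by
      rw [add_mulVec, smul_mulVec, hPc, smul_zero, add_zero]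
    set e := ct - c with he
    have hMe : (A + t • P) *ᵥ e = S *ᵥ lam := by
      rw [he, mulVec_sub, h1, hMc, ← hlam]
      abel
    set w := Sᵀ *ᵥ e with hw
    have hEq1 : e ⬝ᵥ ((A + t • P) *ᵥ e) = w ⬝ᵥ lam := by
      rw [hMe, dotProduct_mulVec, hw, mulVec_transpose]
    have hPe : e ⬝ᵥ (P *ᵥ e) = w ⬝ᵥ (κ₀ *ᵥ w) := by
      rw [hPdef, ← mulVec_mulVec, ← mulVec_mulVec, dotProduct_mulVec e S,
        ← mulVec_transpose, ← hw]
    have hEq2 : e ⬝ᵥ ((A + t • P) *ᵥ e) = e ⬝ᵥ (A *ᵥ e) + t * (w ⬝ᵥ (κ₀ *ᵥ w)) := by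
      rw [add_mulVec, dotProduct_add, smul_mulVec, dotProduct_smul, hPe]
      rfl
    have hmain : α * (e ⬝ᵥ e) + t * (μ * (w ⬝ᵥ w)) ≤ w ⬝ᵥ lam := by
      have h2 := hAb e
      have h3 := hκb w
      have h4 : t * (μ * (w ⬝ᵥ w)) ≤ t * (w ⬝ᵥ (κ₀ *ᵥ w)) :=
        mul_le_mul_of_nonneg_left h3 ht0.le
      rw [← hEq1, hEq2]
      linarith
    have hW0 : 0 ≤ w ⬝ᵥ w := dot_self_nonneg w
    have hE0 : 0 ≤ e ⬝ᵥ e := dot_self_nonneg e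
    have hcs : (w ⬝ᵥ lam) ^ 2 ≤ (w ⬝ᵥ w) * L := cs_dot w lam
    have hEbound : e ⬝ᵥ e ≤ C / t := by
      have hD0 : 0 ≤ w ⬝ᵥ lam := le_trans (by positivity) hmain
      rcases eq_or_lt_of_le hW0 with hWzero | hWpos
      · have hDzero : w ⬝ᵥ lam = 0 := by nlinarith
        have hz : t * (μ * (w ⬝ᵥ w)) = 0 := by rw [← hWzero]; ring
        have hαE : α * (e ⬝ᵥ e) ≤ 0 := by linarith
        have hEzero : e ⬝ᵥ e = 0 := by
          by_contra hne
          have : 0 < e ⬝ᵥ e := lt_of_le_of_ne hE0 (Ne.symm hne)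
          nlinarith
        rw [hEzero, hCdef]
        positivity
      · have hpos1 : 0 ≤ t * (μ * (w ⬝ᵥ w)) := by positivity
        have hpos2 : 0 ≤ α * (e ⬝ᵥ e) := mul_nonneg hα.le hE0
        have hαE : α * (e ⬝ᵥ e) ≤ w ⬝ᵥ lam := by linarith
        have htμW : t * (μ * (w ⬝ᵥ w)) ≤ w ⬝ᵥ lam := by linarith
        have hprod : (α * (e ⬝ᵥ e)) * (t * (μ * (w ⬝ᵥ w))) ≤ (w ⬝ᵥ w) * L := by
          calc (α * (e ⬝ᵥ e)) * (t * (μ * (w ⬝ᵥ w))) ≤ (w ⬝ᵥ lam) * (w ⬝ᵥ lam) :=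
                mul_le_mul hαE htμW hpos1 hD0
            _ = (w ⬝ᵥ lam) ^ 2 := (sq _).symm
            _ ≤ (w ⬝ᵥ w) * L := hcs
        have h5 : α * (e ⬝ᵥ e) * (t * μ) ≤ L := by
          refine le_of_mul_le_mul_right ?_ hWpos
          calc (α * (e ⬝ᵥ e) * (t * μ)) * (w ⬝ᵥ w)
              = (α * (e ⬝ᵥ e)) * (t * (μ * (w ⬝ᵥ w))) := by ring
            _ ≤ (w ⬝ᵥ w) * L := hprod
            _ = L * (w ⬝ᵥ w) := by ring
        rw [hCdef, div_div, le_div_iff₀ (by positivity)]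
        calc (e ⬝ᵥ e) * (α * μ * t) = α * (e ⬝ᵥ e) * (t * μ) := by ring
          _ ≤ L := h5
    have hsq : 0 ≤ Real.sqrt (C / t) := Real.sqrt_nonneg _
    rw [pi_norm_le_iff_of_nonneg hsq]
    intro i
    rw [Real.norm_eq_abs]
    apply Real.abs_le_sqrt
    calc e i ^ 2 ≤ e ⬝ᵥ e := by
          rw [sq]
          exact Finset.single_le_sum (f := fun j => e j * e j)
            (fun j _ => mul_self_nonneg _) (Finset.mem_univ i)
      _ ≤ C / t := hEbound
  have hlim : Tendsto (fun t : ℝ => Real.sqrt (C / t)) atTop (nhds 0) := by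
    have h0 : Tendsto (fun t : ℝ => C / t) atTop (nhds 0) :=
      Tendsto.div_atTop tendsto_const_nhds tendsto_id
    have := (Real.continuous_sqrt.tendsto 0).comp h0
    simpa [Function.comp_def] using this
  rw [tendsto_iff_norm_sub_tendsto_zero]
  apply squeeze_zero' (Eventually.of_forall fun t => norm_nonneg _) ?_ hlim
  filter_upwards [eventually_ge_atTop 1] with t ht using key t ht
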